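/- Exponential integrability from sparse domination: if |g| ≤ C ∑_{S ∈ S} 1_S pointwise μ-a.e. on Q, where S is a collection of dyadic subcubes of Q satisfying μ({∑_{S∈S} 1_S ≥ k}) ≤ 2^{-(k−1)} μ(Q) for all k ≥ 1, then (1/μ(Q)) ∫_Q exp(c|g|/C) dμ ≤ C' for the absolute constants c = (log 2)/2 and some absolute C'. -/

import Mathlib

open MeasureTheory Set ENNReal

noncomputable section

/-- A dyadic cube in `ℝ^d`: side length `2^n`, lower-left corner `m * 2^n`. -/
structure DyadicCube (d : ℕ) where
  n : ℤ
  m : Fin d → ℤ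

namespace DyadicCube

/-- The underlying set of a dyadic cube. -/
def toSet {d : ℕ} (Q : DyadicCube d) : Set (Fin d → ℝ) :=
  {x | ∀ i, (Q.m i : ℝ) * 2 ^ Q.n ≤ x i ∧ x i < ((Q.m i : ℝ) + 1) * 2 ^ Q.n}

/-- The dyadic parent of a dyadic cube. -/
def parent {d : ℕ} (Q : DyadicCube d) : DyadicCube d :=
  ⟨Q.n + 1, fun i => Int.fdiv (Q.m i) 2⟩

/-- The `k`-th dyadic ancestor of a dyadic cube. -/
def ancestor {d : ℕ} (k : ℕ) (Q : DyadicCube d) : DyadicCube d :=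
  parent^[k] Q

end DyadicCube

/-- `m` is a median of `f` on `Q` (w.r.t. `μ`). -/
def IsMedian {d : ℕ} (μ : Measure (Fin d → ℝ)) (f : (Fin d → ℝ) → ℝ)
    (Q : Set (Fin d → ℝ)) (m : ℝ) : Prop :=
  μ (Q ∩ {x | m < f x}) ≤ μ Q / 2 ∧ μ (Q ∩ {x | f x < m}) ≤ μ Q / 2

/-- The relative median oscillation `r_λ(f; Q)` of `f` about zero on `Q`. -/
def rOsc {d : ℕ} (μ : Measure (Fin d → ℝ)) (lam : ℝ) (f : (Fin d → ℝ) → ℝ)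
    (Q : Set (Fin d → ℝ)) : ℝ :=
  sInf {r : ℝ | 0 ≤ r ∧ μ (Q ∩ {x | r < |f x|}) ≤ ENNReal.ofReal lam * μ Q}

/-- The median oscillation `ω_λ(f; Q)`. -/
def mOsc {d : ℕ} (μ : Measure (Fin d → ℝ)) (lam : ℝ) (f : (Fin d → ℝ) → ℝ)
    (Q : Set (Fin d → ℝ)) : ℝ :=
  ⨅ c : ℝ, rOsc μ lam (fun x => f x - c) Q

/-- The average `⟨f⟩_Q = (1/μ(Q)) ∫_Q f dμ`. -/
def avg {d : ℕ} (μ : Measure (Fin d → ℝ)) (f : (Fin d → ℝ) → ℝ)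
    (Q : Set (Fin d → ℝ)) : ℝ :=
  (∫ x in Q, f x ∂μ) / (μ Q).toReal

lemma DyadicCube.measurableSet_toSet {d : ℕ} (Q : DyadicCube d) :
    MeasurableSet Q.toSet := by
  have h : Q.toSet = ⋂ i, (fun x : Fin d → ℝ => x i) ⁻¹'
      Set.Ico ((Q.m i : ℝ) * 2 ^ Q.n) (((Q.m i : ℝ) + 1) * 2 ^ Q.n) := by
    ext x; simp [DyadicCube.toSet, Set.mem_Ico]
  rw [h]
  exact MeasurableSet.iInter fun i => (measurable_pi_apply i) measurableSet_Ico

/-- exponential integrability from sparse domination, with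
`c = (log 2)/2` and some absolute constant `C'`. -/
theorem exp_integrability_from_sparse_domination :
    ∃ C' : ℝ, 0 < C' ∧
      ∀ (d : ℕ) (μ : Measure (Fin d → ℝ)), IsLocallyFiniteMeasure μ →
      ∀ (Q : DyadicCube d), 0 < μ Q.toSet → μ Q.toSet < ⊤ →
      ∀ (g : (Fin d → ℝ) → ℝ), Measurable g →
      ∀ (C : ℝ), 0 < C →
      ∀ (𝒮 : Set (DyadicCube d)), 𝒮.Countable →
        (∀ S ∈ 𝒮, (S : DyadicCube d).toSet ⊆ Q.toSet) →
        (∀ᵐ x ∂μ, x ∈ Q.toSet →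
          |g x| ≤ C * ∑' S : 𝒮, (S : DyadicCube d).toSet.indicator (fun _ => (1 : ℝ)) x) →
        (∀ k : ℕ, 1 ≤ k →
          μ {x | x ∈ Q.toSet ∧ (k : ℝ) ≤
              ∑' S : 𝒮, (S : DyadicCube d).toSet.indicator (fun _ => (1 : ℝ)) x} ≤
            (2 : ℝ≥0∞)⁻¹ ^ (k - 1) * μ Q.toSet) →
        ∫ x in Q.toSet, Real.exp ((Real.log 2 / 2) * |g x| / C) ∂μ ≤
          C' * (μ Q.toSet).toReal := by
  refine ⟨100, by norm_num, ?_⟩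
  intro d μ _ Q hQpos hQtop g hg C hC 𝒮 hcount hsub hdom hlevel
  haveI : Countable ↥𝒮 := hcount.to_subtype
  set c : ℝ := Real.log 2 / 2 with hc
  have hc0 : 0 ≤ c := by
    have := Real.log_nonneg (by norm_num : (1:ℝ) ≤ 2)
    positivity
  -- the counting function
  set N : (Fin d → ℝ) → ℝ :=
    fun x => ∑' S : 𝒮, (S : DyadicCube d).toSet.indicator (fun _ => (1 : ℝ)) x with hN
  have hN0 : ∀ x, 0 ≤ N x := fun x =>
    tsum_nonneg fun S => Set.indicator_nonneg (fun _ _ => zero_le_one) x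
  -- ENNReal version for measurability
  set E : (Fin d → ℝ) → ℝ≥0∞ :=
    fun x => ∑' S : 𝒮, ENNReal.ofReal
      ((S : DyadicCube d).toSet.indicator (fun _ => (1 : ℝ)) x) with hE
  have hEmeas : Measurable E :=
    Measurable.ennreal_tsum fun S =>
      (measurable_const.indicator (S : DyadicCube d).measurableSet_toSet).ennreal_ofReal
  have hNE : ∀ x, N x = (E x).toReal := by
    intro x
    by_cases hs : Summable fun S : 𝒮 =>
        (S : DyadicCube d).toSet.indicator (fun _ => (1 : ℝ)) x
    · have h1 : ENNReal.ofReal (N x) = E x :=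
        ENNReal.ofReal_tsum_of_nonneg
          (fun S => Set.indicator_nonneg (fun _ _ => zero_le_one) x) hs
      rw [← h1, ENNReal.toReal_ofReal (hN0 x)]
    · have hx0 : N x = 0 := tsum_eq_zero_of_not_summable hs
      have hEtop : E x = ⊤ := by
        by_contra h
        apply hs
        have := ENNReal.summable_toReal (f := fun S : 𝒮 => ENNReal.ofReal
          ((S : DyadicCube d).toSet.indicator (fun _ => (1 : ℝ)) x)) h
        convert this using 2 with S
        rw [ENNReal.toReal_ofReal (Set.indicator_nonneg (fun _ _ => zero_le_one) x)]
      rw [hx0, hEtop, ENNReal.toReal_top]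
  -- superlevel sets
  set B : ℕ → Set (Fin d → ℝ) := fun j => {y | (j : ℝ) ≤ N y} with hB
  have hBmeas : ∀ j, MeasurableSet (B j) := by
    intro j
    have : B j = {y | (j : ℝ) ≤ (E y).toReal} := by
      ext y; simp only [hB, Set.mem_setOf_eq, hNE]
    rw [this]
    exact measurableSet_le measurable_const hEmeas.ennreal_toReal
  have hQmeas : MeasurableSet Q.toSet := Q.measurableSet_toSet
  -- sqrt 2 facts
  have hs2 : Real.sqrt 2 = Real.exp c := by
    rw [hc, ← Real.log_sqrt (by norm_num : (0:ℝ) ≤ 2),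
      Real.exp_log (Real.sqrt_pos.mpr (by norm_num))]
  have hs2pos : (0:ℝ) < Real.sqrt 2 := Real.sqrt_pos.mpr (by norm_num)
  have hs2lt : Real.sqrt 2 ≤ 3/2 := by
    rw [show (3/2 : ℝ) = Real.sqrt ((3/2)^2) by rw [Real.sqrt_sq (by norm_num)]]
    exact Real.sqrt_le_sqrt (by norm_num)
  -- pointwise deterministic bound
  have hpt : ∀ x, ENNReal.ofReal (Real.exp (c * N x)) ≤
      ENNReal.ofReal (Real.sqrt 2) +
        ∑' k : ℕ, ENNReal.ofReal (Real.sqrt 2 ^ (k + 2)) *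
          (B (k + 1)).indicator (fun _ => (1 : ℝ≥0∞)) x := by
    intro x
    rcases Nat.eq_zero_or_pos ⌊N x⌋₊ with h0 | hpos
    · have hlt : N x < 1 := Nat.floor_eq_zero.mp h0
      have : Real.exp (c * N x) ≤ Real.sqrt 2 := by
        rw [hs2]
        exact Real.exp_le_exp.mpr (by nlinarith [hN0 x])
      exact le_trans (ENNReal.ofReal_le_ofReal this) le_self_add
    · set n := ⌊N x⌋₊ with hn
      have hub : N x < n + 1 := Nat.lt_floor_add_one _
      have hlb : (n : ℝ) ≤ N x := Nat.floor_le (hN0 x)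
      have hexp : Real.exp (c * N x) ≤ Real.sqrt 2 ^ (n + 1) := by
        rw [hs2, ← Real.exp_nat_mul]
        exact Real.exp_le_exp.mpr (by push_cast; nlinarith [hN0 x])
      have hmem : x ∈ B n := hlb
      obtain ⟨k, hk⟩ : ∃ k, n = k + 1 := ⟨n - 1, by omega⟩
      have hterm : ENNReal.ofReal (Real.exp (c * N x)) ≤
          ENNReal.ofReal (Real.sqrt 2 ^ (k + 2)) *
            (B (k + 1)).indicator (fun _ => (1 : ℝ≥0∞)) x := by
        rw [← hk, Set.indicator_of_mem hmem, mul_one]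
        exact ENNReal.ofReal_le_ofReal (by rw [show k + 2 = n + 1 by omega] at *; exact hexp)
      exact le_trans hterm (le_add_left (ENNReal.le_tsum k))
  -- a.e. bound from sparse domination
  have hae : ∀ᵐ x ∂(μ.restrict Q.toSet),
      ENNReal.ofReal (Real.exp (c * |g x| / C)) ≤ ENNReal.ofReal (Real.exp (c * N x)) := by
    rw [ae_restrict_iff' hQmeas]
    filter_upwards [hdom] with x hx hxQ
    have h1 : |g x| ≤ C * N x := hx hxQ
    apply ENNReal.ofReal_le_ofReal
    apply Real.exp_le_exp.mpr
    rw [div_le_iff₀ hC] at *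
    nlinarith [abs_nonneg (g x)]
  -- the exp function is measurable
  have hgm : Measurable fun x => Real.exp (c * |g x| / C) :=
    (Real.measurable_exp.comp (((measurable_const.mul hg.abs).div_const C)))
  -- pass to lintegral
  rw [MeasureTheory.integral_eq_lintegral_of_nonneg_ae
    (Filter.Eventually.of_forall fun x => (Real.exp_pos _).le)
    hgm.aestronglyMeasurable]
  -- bound the lintegral
  have key : (∫⁻ x in Q.toSet, ENNReal.ofReal (Real.exp (c * |g x| / C)) ∂μ) ≤
      ENNReal.ofReal 100 * μ Q.toSet := by
    calc (∫⁻ x in Q.toSet, ENNReal.ofReal (Real.exp (c * |g x| / C)) ∂μ)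
        ≤ ∫⁻ x in Q.toSet, ENNReal.ofReal (Real.exp (c * N x)) ∂μ :=
          lintegral_mono_ae hae
      _ ≤ ∫⁻ x in Q.toSet, (ENNReal.ofReal (Real.sqrt 2) +
            ∑' k : ℕ, ENNReal.ofReal (Real.sqrt 2 ^ (k + 2)) *
              (B (k + 1)).indicator (fun _ => (1 : ℝ≥0∞)) x) ∂μ :=
          lintegral_mono fun x => hpt x
      _ = ENNReal.ofReal (Real.sqrt 2) * μ Q.toSet +
            ∑' k : ℕ, ENNReal.ofReal (Real.sqrt 2 ^ (k + 2)) * μ (B (k + 1) ∩ Q.toSet) := by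
          rw [lintegral_add_left measurable_const, lintegral_const,
            Measure.restrict_apply_univ,
            lintegral_tsum (fun k => ((measurable_const.indicator
              (hBmeas (k+1))).const_mul _).aemeasurable)]
          congr 1
          refine tsum_congr fun k => ?_
          rw [lintegral_const_mul _ (measurable_const.indicator (hBmeas (k+1))),
            lintegral_indicator (hBmeas (k+1)), setLIntegral_one,
            Measure.restrict_apply (hBmeas (k+1))]
      _ ≤ ENNReal.ofReal (Real.sqrt 2) * μ Q.toSet +
            ∑' k : ℕ, ENNReal.ofReal (Real.sqrt 2 ^ (k + 2)) *
              ((2 : ℝ≥0∞)⁻¹ ^ k * μ Q.toSet) := by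
          gcongr with k
          have hset : B (k + 1) ∩ Q.toSet = {x | x ∈ Q.toSet ∧ ((k + 1 : ℕ) : ℝ) ≤ N x} := by
            ext y; simp [hB, Set.mem_inter_iff, and_comm]
          rw [hset]
          have := hlevel (k + 1) (by omega)
          simpa using this
      _ = (ENNReal.ofReal (Real.sqrt 2) +
            ∑' k : ℕ, ENNReal.ofReal (Real.sqrt 2 ^ (k + 2)) * (2 : ℝ≥0∞)⁻¹ ^ k) *
              μ Q.toSet := by
          rw [add_mul, ← ENNReal.tsum_mul_right]
          congr 1
          exact tsum_congr fun k => by ring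
      _ ≤ ENNReal.ofReal 100 * μ Q.toSet := by
          gcongr
          -- compute the constant
          have hhalf : ((2 : ℝ≥0∞)⁻¹ : ℝ≥0∞) = ENNReal.ofReal (2⁻¹ : ℝ) := by
            rw [ENNReal.ofReal_inv_of_pos (by norm_num)]
            norm_num
          have hterm : ∀ k : ℕ, ENNReal.ofReal (Real.sqrt 2 ^ (k + 2)) * (2 : ℝ≥0∞)⁻¹ ^ k
              = ENNReal.ofReal (2 * (Real.sqrt 2 * 2⁻¹) ^ k) := by
            intro k
            rw [hhalf, ← ENNReal.ofReal_pow (by norm_num), ← ENNReal.ofReal_mul (by positivity)]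
            congr 1
            rw [mul_pow]
            rw [pow_add, Real.sq_sqrt (by norm_num : (0:ℝ) ≤ 2)]
            ring
          have hr0 : (0:ℝ) ≤ Real.sqrt 2 * 2⁻¹ := by positivity
          have hr1 : Real.sqrt 2 * 2⁻¹ < 1 := by nlinarith
          have hsum : Summable fun k : ℕ => 2 * (Real.sqrt 2 * 2⁻¹) ^ k :=
            (summable_geometric_of_lt_one hr0 hr1).mul_left 2
          calc ENNReal.ofReal (Real.sqrt 2) +
                ∑' k : ℕ, ENNReal.ofReal (Real.sqrt 2 ^ (k + 2)) * (2 : ℝ≥0∞)⁻¹ ^ k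
              = ENNReal.ofReal (Real.sqrt 2) +
                  ENNReal.ofReal (∑' k : ℕ, 2 * (Real.sqrt 2 * 2⁻¹) ^ k) := by
                rw [ENNReal.ofReal_tsum_of_nonneg (fun k => by positivity) hsum]
                exact congrArg _ (tsum_congr hterm)
            _ = ENNReal.ofReal (Real.sqrt 2 + ∑' k : ℕ, 2 * (Real.sqrt 2 * 2⁻¹) ^ k) := by
                rw [ENNReal.ofReal_add hs2pos.le (tsum_nonneg fun k => by positivity)]
            _ ≤ ENNReal.ofReal 100 := by
                apply ENNReal.ofReal_le_ofReal
                rw [tsum_mul_left, tsum_geometric_of_lt_one hr0 hr1]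
                have h4 : (1 - Real.sqrt 2 * 2⁻¹)⁻¹ ≤ 4 := by
                  rw [inv_le_comm₀ (by nlinarith) (by norm_num)]
                  nlinarith
                nlinarith
  -- conclude
  have hne : ENNReal.ofReal 100 * μ Q.toSet ≠ ⊤ :=
    ENNReal.mul_ne_top ENNReal.ofReal_ne_top hQtop.ne
  calc (∫⁻ x in Q.toSet, ENNReal.ofReal (Real.exp (c * |g x| / C)) ∂μ).toReal
      ≤ (ENNReal.ofReal 100 * μ Q.toSet).toReal := ENNReal.toReal_mono hne key
    _ = 100 * (μ Q.toSet).toReal := by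
        rw [ENNReal.toReal_mul, ENNReal.toReal_ofReal (by norm_num)]
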